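/- arXiv:1712.10123 — 2 statements merged into one kernel-verified Lean document; each statement's English description precedes it below -/
import Mathlib

section
/- An element x of a trim lattice L is left modular if and only if x lies on the spine of L (i.e., on some chain of maximal length). -/
/-- An element `x` of a lattice is *left modular* if `(y ⊔ x) ⊓ z = y ⊔ (x ⊓ z)`
for all `y ≤ z`. -/
def LeftModular {L : Type*} [Lattice L] (x : L) : Prop :=
  ∀ y z : L, y ≤ z → (y ⊔ x) ⊓ z = y ⊔ (x ⊓ z)

/-- The data of an extremal lattice of length `n` together with a fixed
maximal-length chain `x₀ ⋖ ⋯ ⋖ xₙ` and the induced numberings of the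
join-irreducibles `j₁, …, jₙ` and meet-irreducibles `m₁, …, mₙ`. -/
structure ExtremalChainData (L : Type*) [Lattice L] [Fintype L] [BoundedOrder L]
    (n : ℕ) where
  x : Fin (n + 1) → L
  x_strictMono : StrictMono x
  x_bot : x 0 = ⊥
  x_top : x (Fin.last n) = ⊤
  maxlen : ∀ (m : ℕ) (c : Fin (m + 1) → L), StrictMono c → m ≤ n
  j : Fin n → L
  m : Fin n → L
  j_irr : ∀ i, SupIrred (j i)
  m_irr : ∀ i, InfIrred (m i)
  j_inj : Function.Injective j
  m_inj : Function.Injective m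
  j_surj : ∀ a : L, SupIrred a → a ∈ Set.range j
  m_surj : ∀ a : L, InfIrred a → a ∈ Set.range m
  x_eq_sup : ∀ i : Fin (n + 1),
    x i = (Finset.univ.filter fun k : Fin n => (k : ℕ) < (i : ℕ)).sup j
  x_eq_inf : ∀ i : Fin (n + 1),
    x i = (Finset.univ.filter fun k : Fin n => (i : ℕ) ≤ (k : ℕ)).inf m

namespace ExtremalChainData

variable {L : Type*} [Lattice L] [Fintype L] [BoundedOrder L] {n : ℕ}

/-- `x_J`: the set of indices of join-irreducibles lying below `a`. -/
def setJ (D : ExtremalChainData L n) (a : L) : Set (Fin n) := {i | D.j i ≤ a}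

/-- `x_M`: the set of indices of meet-irreducibles lying above `a`. -/
def setM (D : ExtremalChainData L n) (a : L) : Set (Fin n) := {i | a ≤ D.m i}

/-- The Galois graph: a directed edge `i → k` when `jᵢ ≰ m_k` and `i ≠ k`. -/
def galoisEdge (D : ExtremalChainData L n) (i k : Fin n) : Prop :=
  ¬ D.j i ≤ D.m k ∧ i ≠ k

/-- The left modular labelling: `i` is the label of the cover `y ⋖ z` iff `i` is
minimal with `y ⊔ (xᵢ ⊓ z) = z`. -/
def IsLabel (D : ExtremalChainData L n) (y z : L) (i : Fin n) : Prop :=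
  y ⊔ (D.x i.succ ⊓ z) = z ∧ ∀ k : Fin n, y ⊔ (D.x k.succ ⊓ z) = z → i ≤ k

open scoped Classical in
/-- `D^γ(a)`: the set of labels of cover relations below `a`. -/
noncomputable def downLabels (D : ExtremalChainData L n) (a : L) : Finset (Fin n) :=
  Finset.univ.filter fun i => ∃ y, y ⋖ a ∧ D.IsLabel y a i

open scoped Classical in
/-- `U^γ(a)`: the set of labels of cover relations above `a`. -/
noncomputable def upLabels (D : ExtremalChainData L n) (a : L) : Finset (Fin n) :=
  Finset.univ.filter fun i => ∃ z, a ⋖ z ∧ D.IsLabel a z i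

/-- The fixed chain consists of left modular elements, i.e. the lattice is trim. -/
def IsTrim (D : ExtremalChainData L n) : Prop := ∀ i, LeftModular (D.x i)

end ExtremalChainData


open Finset

section AuxGeneric

variable {α : Type*} [PartialOrder α]

/-- In a finite order, below any strict inequality there is a cover. -/
lemma exists_covBy_le' [Fintype α] {u v : α} (h : u < v) : ∃ w, u ⋖ w ∧ w ≤ v := by
  classical
  have hne : (univ.filter fun w => u < w ∧ w ≤ v).Nonempty := ⟨v, by simp [h]⟩
  obtain ⟨w, hw, hmin⟩ : ∃ w ∈ (univ.filter fun w => u < w ∧ w ≤ v), ∀ c ∈ (univ.filter fun w => u < w ∧ w ≤ v), ¬ c < w := by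
    obtain ⟨w, hw⟩ := Finset.exists_minimal hne
    exact ⟨w, hw.1, fun c hc => hw.not_lt hc⟩
  simp only [mem_filter, mem_univ, true_and] at hw
  refine ⟨w, ⟨hw.1, fun c hc hc' => ?_⟩, hw.2⟩
  exact hmin c (by simp [hc, hc'.le.trans hw.2]) hc'

/-- From a finite chain of cardinality `k+1` one can extract a strictly
monotone sequence enumerating it. -/
lemma exists_chain_of_card :
    ∀ (k : ℕ) (U : Finset α), IsChain (· ≤ ·) (U : Set α) → U.card = k + 1 →
      ∃ c : Fin (k + 1) → α, StrictMono c ∧ ∀ b, b ∈ U ↔ ∃ i, c i = b := by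
  intro k
  induction k with
  | zero =>
    intro U _ hcard
    obtain ⟨z, hz⟩ := Finset.card_eq_one.1 hcard
    refine ⟨fun _ => z, fun i j hij => absurd (show (i:ℕ) < (j:ℕ) from hij) (by omega), ?_⟩
    simp [hz, eq_comm]
  | succ k ih =>
    intro U hch hcard
    classical
    have hne : U.Nonempty := Finset.card_pos.1 (by omega)
    obtain ⟨z, hzU, hzmax⟩ : ∃ z ∈ U, ∀ b ∈ U, ¬ z < b := by
      obtain ⟨z, hz⟩ := Finset.exists_maximal hne
      exact ⟨z, hz.1, fun b hb hlt => lt_irrefl z (lt_of_lt_of_le hlt (hz.2 hb hlt.le))⟩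
    have hz_top : ∀ b ∈ U, b ≤ z := by
      intro b hb
      rcases eq_or_ne b z with rfl | hbz
      · exact le_rfl
      rcases hch.total hb hzU with h | h
      · exact h
      · exact absurd (lt_of_le_of_ne h (Ne.symm hbz)) (hzmax b hb)
    have hcard' : (U.erase z).card = k + 1 := by
      rw [Finset.card_erase_of_mem hzU]; omega
    obtain ⟨c', hc'mono, hc'mem⟩ := ih (U.erase z) (hch.mono (by simp [Finset.coe_subset])) hcard'
    have hc'U : ∀ t : Fin (k + 1), c' t ∈ U.erase z := fun t => (hc'mem (c' t)).2 ⟨t, rfl⟩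
    refine ⟨fun i : Fin (k + 2) => if h : (i : ℕ) < k + 1 then c' ⟨i, h⟩ else z, ?_, ?_⟩
    · intro i j hij
      by_cases hi : (i : ℕ) < k + 1
      · by_cases hj : (j : ℕ) < k + 1
        · simpa [hi, hj] using hc'mono (show (⟨(i:ℕ), hi⟩ : Fin (k+1)) < ⟨(j:ℕ), hj⟩ from hij)
        · have h1 := hc'U ⟨i, hi⟩
          rw [Finset.mem_erase] at h1
          simpa [hi, hj] using lt_of_le_of_ne (hz_top _ h1.2) h1.1
      · have hj : ¬ (j : ℕ) < k + 1 := fun hj => hi (lt_trans (show (i:ℕ) < (j:ℕ) from hij) hj)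
        exfalso
        have : (i : ℕ) = k + 1 := by omega
        have : (j : ℕ) = k + 1 := by omega
        exact absurd (Fin.ext (by omega) : i = j) (ne_of_lt hij)
    · intro b
      constructor
      · intro hb
        rcases eq_or_ne b z with rfl | hbz
        · exact ⟨Fin.last (k + 1), by simp⟩
        · obtain ⟨t, ht⟩ := (hc'mem b).1 (Finset.mem_erase.2 ⟨hbz, hb⟩)
          exact ⟨⟨t, lt_trans t.isLt (Nat.lt_succ_self _)⟩, by simpa [t.isLt] using ht⟩
      · rintro ⟨i, rfl⟩
        by_cases hi : (i : ℕ) < k + 1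
        · simpa [hi] using Finset.mem_of_mem_erase (hc'U ⟨i, hi⟩)
        · simpa [hi] using hzU

/-- A monotone sequence has at least one more value than it has jumps. -/
lemma card_jumps_lt_card_image {β : Type*} [DecidableEq α] {m : ℕ} (w : Fin (m + 1) → α)
    (hw : Monotone w) :
    ∀ (S : Finset (Fin m)), (∀ s ∈ S, w s.castSucc ≠ w s.succ) →
      S.card + 1 ≤ (univ.image w).card := by
  intro S hS
  have hinj : Set.InjOn (fun s : Fin m => w s.succ) ↑S := by
    intro s hs t ht hst
    change w s.succ = w t.succ at hst
    by_contra hne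
    rcases lt_or_gt_of_ne (show s ≠ t from hne) with h | h
    · have h1 : w s.succ ≤ w t.castSucc := hw (by
        simp only [Fin.le_def, Fin.val_succ, Fin.coe_castSucc]; exact h)
      have h2 : w t.castSucc ≤ w t.succ := hw t.castSucc_le_succ
      exact hS t ht (le_antisymm h2 (hst ▸ h1))
    · have h1 : w t.succ ≤ w s.castSucc := hw (by
        simp only [Fin.le_def, Fin.val_succ, Fin.coe_castSucc]; exact h)
      have h2 : w s.castSucc ≤ w s.succ := hw s.castSucc_le_succ
      exact hS s hs (le_antisymm h2 (hst.symm ▸ h1))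
  have hzero : w 0 ∉ S.image (fun s : Fin m => w s.succ) := by
    simp only [Finset.mem_image, not_exists, not_and]
    rintro s hs h
    have h1 : w 0 ≤ w s.castSucc := hw (Fin.zero_le _)
    have h2 : w s.castSucc ≤ w s.succ := hw s.castSucc_le_succ
    exact hS s hs (le_antisymm h2 (h ▸ h1))
  have hsub : insert (w 0) (S.image fun s : Fin m => w s.succ) ⊆ univ.image w := by
    intro b hb
    rcases Finset.mem_insert.1 hb with rfl | hb
    · exact Finset.mem_image.2 ⟨0, by simp⟩
    · obtain ⟨s, _, rfl⟩ := Finset.mem_image.1 hb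
      exact Finset.mem_image.2 ⟨s.succ, by simp⟩
  calc S.card + 1 = (insert (w 0) (S.image fun s : Fin m => w s.succ)).card := by
        rw [Finset.card_insert_of_notMem hzero, Finset.card_image_of_injOn hinj]
    _ ≤ (univ.image w).card := Finset.card_le_card hsub

end AuxGeneric

namespace ExtremalChainData

open scoped Classical

variable {L : Type*} [Lattice L] [Fintype L] [BoundedOrder L] {n : ℕ}
variable (D : ExtremalChainData L n)

/-- Finset of indices of join-irreducibles below `a`. -/
noncomputable def Jf (a : L) : Finset (Fin n) := univ.filter fun i => D.j i ≤ a

/-- Finset of indices of meet-irreducibles above `a`. -/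
noncomputable def Mf (a : L) : Finset (Fin n) := univ.filter fun i => a ≤ D.m i

lemma mem_Jf {a : L} {i : Fin n} : i ∈ D.Jf a ↔ D.j i ≤ a := by simp [Jf]

lemma mem_Mf {a : L} {i : Fin n} : i ∈ D.Mf a ↔ a ≤ D.m i := by simp [Mf]

lemma xsucc_eq (i : Fin n) : D.x i.succ = D.x i.castSucc ⊔ D.j i := by
  rw [D.x_eq_sup i.succ, D.x_eq_sup i.castSucc]
  have h : (univ.filter fun k : Fin n => (k : ℕ) < ((i.succ : Fin (n+1)) : ℕ))
      = insert i (univ.filter fun k : Fin n => (k : ℕ) < ((i.castSucc : Fin (n+1)) : ℕ)) := by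
    ext k
    simp only [mem_filter, mem_univ, true_and, mem_insert, Fin.val_succ, Fin.coe_castSucc,
      Fin.ext_iff]
    omega
  rw [h, Finset.sup_insert, sup_comm]

lemma xcast_eq (i : Fin n) : D.x i.castSucc = D.x i.succ ⊓ D.m i := by
  rw [D.x_eq_inf i.castSucc, D.x_eq_inf i.succ]
  have h : (univ.filter fun k : Fin n => ((i.castSucc : Fin (n+1)) : ℕ) ≤ (k : ℕ))
      = insert i (univ.filter fun k : Fin n => ((i.succ : Fin (n+1)) : ℕ) ≤ (k : ℕ)) := by
    ext k
    simp only [mem_filter, mem_univ, true_and, mem_insert, Fin.val_succ, Fin.coe_castSucc,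
      Fin.ext_iff]
    omega
  rw [h, Finset.inf_insert, inf_comm]

lemma j_le_xsucc (i : Fin n) : D.j i ≤ D.x i.succ := by
  rw [D.xsucc_eq]; exact le_sup_right

lemma j_not_le_m_self (i : Fin n) : ¬ D.j i ≤ D.m i := by
  intro h
  have hj : D.j i ≤ D.x i.castSucc := by
    rw [D.xcast_eq]; exact le_inf (D.j_le_xsucc i) h
  have h2 : D.x i.succ = D.x i.castSucc := by rw [D.xsucc_eq, sup_eq_left.2 hj]
  exact absurd h2 (D.x_strictMono (Fin.castSucc_lt_succ (i := i))).ne'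

lemma j_le_x_iff {k : Fin n} {t : Fin (n + 1)} : D.j k ≤ D.x t ↔ (k : ℕ) < (t : ℕ) := by
  constructor
  · intro h
    by_contra hn
    have hx : D.x t ≤ D.m k := by
      rw [D.x_eq_inf t]
      exact Finset.inf_le (by simp; omega)
    exact D.j_not_le_m_self k (h.trans hx)
  · intro h
    rw [D.x_eq_sup t]
    exact Finset.le_sup (by simp [h])

lemma x_le_m_iff {t : Fin (n + 1)} {k : Fin n} : D.x t ≤ D.m k ↔ (t : ℕ) ≤ (k : ℕ) := by
  constructor
  · intro h
    by_contra hn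
    exact D.j_not_le_m_self k ((D.j_le_x_iff.2 (by omega)).trans h)
  · intro h
    rw [D.x_eq_inf t]
    exact Finset.inf_le (by simp [h])

lemma j_le_m_of_lt {i k : Fin n} (h : i < k) : D.j i ≤ D.m k :=
  le_trans (D.j_le_xsucc i) (D.x_le_m_iff.2 (by simp [Fin.val_succ]; omega))

lemma sup_Jf (a : L) : (D.Jf a).sup D.j = a := by
  have key : ∀ a : L, a ≤ (D.Jf a).sup D.j := by
    intro a
    refine wellFounded_lt.induction (C := fun a => a ≤ (D.Jf a).sup D.j) a ?_
    intro a ih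
    rcases eq_or_ne a ⊥ with rfl | h0
    · exact bot_le
    by_cases hirr : SupIrred a
    · obtain ⟨i, rfl⟩ := D.j_surj a hirr
      exact Finset.le_sup (D.mem_Jf.2 le_rfl)
    · have hmin : ¬ IsMin a := by simpa [isMin_iff_eq_bot] using h0
      rw [SupIrred, not_and_or] at hirr
      rcases hirr with h | h
      · exact absurd (not_not.1 h) hmin
      push_neg at h
      obtain ⟨b, c, hbc, hb, hc⟩ := h
      have hba : b < a := lt_of_le_of_ne (hbc ▸ le_sup_left) hb
      have hca : c < a := lt_of_le_of_ne (hbc ▸ le_sup_right) hc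
      have hsb : b ≤ (D.Jf a).sup D.j :=
        le_trans (ih b hba) (Finset.sup_mono fun i hi =>
          D.mem_Jf.2 ((D.mem_Jf.1 hi).trans hba.le))
      have hsc : c ≤ (D.Jf a).sup D.j :=
        le_trans (ih c hca) (Finset.sup_mono fun i hi =>
          D.mem_Jf.2 ((D.mem_Jf.1 hi).trans hca.le))
      calc a = b ⊔ c := hbc.symm
        _ ≤ (D.Jf a).sup D.j := sup_le hsb hsc
  exact le_antisymm (Finset.sup_le fun i hi => (D.mem_Jf.1 hi)) (key a)

lemma inf_Mf (a : L) : (D.Mf a).inf D.m = a := by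
  have key : ∀ a : L, (D.Mf a).inf D.m ≤ a := by
    intro a
    refine wellFounded_gt.induction (C := fun a => (D.Mf a).inf D.m ≤ a) a ?_
    intro a ih
    rcases eq_or_ne a ⊤ with rfl | h0
    · exact le_top
    by_cases hirr : InfIrred a
    · obtain ⟨i, rfl⟩ := D.m_surj a hirr
      exact Finset.inf_le (D.mem_Mf.2 le_rfl)
    · have hmax : ¬ IsMax a := by simpa [isMax_iff_eq_top] using h0
      rw [InfIrred, not_and_or] at hirr
      rcases hirr with h | h
      · exact absurd (not_not.1 h) hmax
      push_neg at h
      obtain ⟨b, c, hbc, hb, hc⟩ := h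
      have hba : a < b := lt_of_le_of_ne (hbc ▸ inf_le_left) (Ne.symm hb)
      have hca : a < c := lt_of_le_of_ne (hbc ▸ inf_le_right) (Ne.symm hc)
      have hsb : (D.Mf a).inf D.m ≤ b :=
        le_trans (Finset.inf_mono fun i hi =>
          D.mem_Mf.2 (hba.le.trans (D.mem_Mf.1 hi))) (ih b hba)
      have hsc : (D.Mf a).inf D.m ≤ c :=
        le_trans (Finset.inf_mono fun i hi =>
          D.mem_Mf.2 (hca.le.trans (D.mem_Mf.1 hi))) (ih c hca)
      calc (D.Mf a).inf D.m ≤ b ⊓ c := le_inf hsb hsc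
        _ = a := hbc
  exact le_antisymm (key a) (Finset.le_inf fun i hi => (D.mem_Mf.1 hi))

lemma Jf_ssubset {a b : L} (h : a < b) : D.Jf a ⊂ D.Jf b := by
  rw [Finset.ssubset_iff_subset_ne]
  refine ⟨fun i hi => D.mem_Jf.2 ((D.mem_Jf.1 hi).trans h.le), fun heq => h.ne ?_⟩
  rw [← D.sup_Jf a, ← D.sup_Jf b, heq]

lemma Mf_ssubset {a b : L} (h : a < b) : D.Mf b ⊂ D.Mf a := by
  rw [Finset.ssubset_iff_subset_ne]
  refine ⟨fun i hi => D.mem_Mf.2 (h.le.trans (D.mem_Mf.1 hi)), fun heq => h.ne ?_⟩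
  rw [← D.inf_Mf a, ← D.inf_Mf b, heq]

lemma disjoint_Jf_Mf (a : L) : Disjoint (D.Jf a) (D.Mf a) :=
  Finset.disjoint_left.2 fun i hiJ hiM =>
    D.j_not_le_m_self i ((D.mem_Jf.1 hiJ).trans (D.mem_Mf.1 hiM))

end ExtremalChainData

namespace ExtremalChainData

open scoped Classical

variable {L : Type*} [Lattice L] [Fintype L] [BoundedOrder L] {n : ℕ}
variable (D : ExtremalChainData L n)

/-- The key "label lemma": every cover `u ⋖ v` in a trim lattice has a label
`i` with `jᵢ ≤ v`, `jᵢ ≰ u`, `u ≤ mᵢ` and `v ≰ mᵢ`. -/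
lemma label_lemma (hD : D.IsTrim) {u v : L} (huv : u ⋖ v) :
    ∃ i : Fin n, D.j i ≤ v ∧ ¬ D.j i ≤ u ∧ u ≤ D.m i ∧ ¬ v ≤ D.m i := by
  set T : Finset (Fin (n + 1)) := univ.filter (fun t => u ⊔ (D.x t ⊓ v) = v) with hT
  have hlast : Fin.last n ∈ T := by
    simp only [hT, mem_filter, mem_univ, true_and, D.x_top]
    rw [top_inf_eq, sup_eq_right.2 huv.le]
  have hTne : T.Nonempty := ⟨_, hlast⟩
  set t₀ : Fin (n + 1) := T.min' hTne with ht₀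
  have ht₀T : t₀ ∈ T := T.min'_mem hTne
  have ht₀prop : u ⊔ (D.x t₀ ⊓ v) = v := by
    simpa only [hT, mem_filter, mem_univ, true_and] using ht₀T
  have ht₀ne : t₀ ≠ 0 := by
    intro h
    rw [h, D.x_bot, bot_inf_eq, sup_bot_eq] at ht₀prop
    exact huv.lt.ne ht₀prop
  obtain ⟨i, hi⟩ : ∃ i : Fin n, i.succ = t₀ := by
    rcases Fin.eq_zero_or_eq_succ t₀ with h | h
    · exact absurd h ht₀ne
    · obtain ⟨i, hi⟩ := h; exact ⟨i, hi.symm⟩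
  -- minimality: `x i.castSucc ⊓ v ≤ u`
  have hxc : D.x i.castSucc ⊓ v ≤ u := by
    have hnm : i.castSucc ∉ T := by
      intro hmem
      have := T.min'_le _ hmem
      rw [← ht₀, ← hi] at this
      exact absurd (lt_of_le_of_lt this (Fin.castSucc_lt_succ (i := i))) (lt_irrefl _)
    have h1 : u ⊔ (D.x i.castSucc ⊓ v) ≠ v := by
      simpa only [hT, mem_filter, mem_univ, true_and] using hnm
    rcases huv.eq_or_eq (le_sup_left : u ≤ u ⊔ (D.x i.castSucc ⊓ v))
        (sup_le huv.le inf_le_right) with h | h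
    · exact sup_eq_left.1 h
    · exact absurd h h1
  have hxs : u ⊔ (D.x i.succ ⊓ v) = v := by rw [hi]; exact ht₀prop
  -- left modularity of `x i.castSucc`
  have hlm : (u ⊔ D.x i.castSucc) ⊓ v = u := by
    rw [hD i.castSucc u v huv.le, sup_eq_left.2 hxc]
  -- `j i ≰ u`
  have hju : ¬ D.j i ≤ u := by
    intro h
    have hv : v ≤ u ⊔ D.x i.castSucc := by
      calc v = u ⊔ (D.x i.succ ⊓ v) := hxs.symm
        _ ≤ u ⊔ D.x i.succ := sup_le le_sup_left (inf_le_left.trans le_sup_right)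
        _ = u ⊔ (D.x i.castSucc ⊔ D.j i) := by rw [D.xsucc_eq]
        _ = (u ⊔ D.j i) ⊔ D.x i.castSucc := by rw [sup_comm (D.x i.castSucc), sup_assoc]
        _ = u ⊔ D.x i.castSucc := by rw [sup_eq_left.2 h]
    have : v = u := by
      conv_lhs => rw [← inf_eq_right.2 hv]
      rw [inf_comm] at hlm ⊢
      exact hlm
    exact huv.lt.ne' this
  -- `j i ≤ v` (and `v = u ⊔ j i`)
  have hjv : D.j i ≤ v := by
    obtain ⟨k, hk, hku⟩ : ∃ k ∈ D.Jf (D.x i.succ ⊓ v), ¬ D.j k ≤ u := by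
      by_contra hcon
      push_neg at hcon
      have : D.x i.succ ⊓ v ≤ u := by
        rw [← D.sup_Jf (D.x i.succ ⊓ v)]
        exact Finset.sup_le hcon
      rw [sup_eq_left.2 this] at hxs
      exact huv.lt.ne hxs
    have hkiv : D.j k ≤ D.x i.succ ⊓ v := D.mem_Jf.1 hk
    have hki : (k : ℕ) < (i : ℕ) + 1 := by
      have := D.j_le_x_iff.1 (hkiv.trans inf_le_left)
      simpa [Fin.val_succ] using this
    rcases lt_or_eq_of_le (Nat.lt_succ_iff.1 hki) with h | h
    · exfalso
      have h1 : D.j k ≤ D.x i.castSucc := D.j_le_x_iff.2 (by simpa using h)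
      exact hku ((le_inf h1 (hkiv.trans inf_le_right)).trans hxc)
    · have : k = i := Fin.ext h
      rw [← this]
      exact hkiv.trans inf_le_right
  have hveq : u ⊔ D.j i = v := by
    rcases huv.eq_or_eq (le_sup_left : u ≤ u ⊔ D.j i) (sup_le huv.le hjv) with h | h
    · exact absurd (sup_eq_left.1 h) hju
    · exact h
  -- `v ≰ m i`
  have hvm : ¬ v ≤ D.m i := by
    intro h
    have h1 : D.x i.succ ⊓ v ≤ u := by
      have : D.x i.succ ⊓ v ≤ D.x i.castSucc := by
        rw [D.xcast_eq]
        exact le_inf inf_le_left (inf_le_right.trans h)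
      exact (le_inf this inf_le_right).trans hxc
    rw [sup_eq_left.2 h1] at hxs
    exact huv.lt.ne hxs
  -- `u ≤ m i`
  have hum : u ≤ D.m i := by
    obtain ⟨k, hk1, hk2, hk3⟩ : ∃ k : Fin n, u ⊔ D.x i.castSucc ≤ D.m k ∧ ¬ v ≤ D.m k ∧
        ((i.castSucc : Fin (n + 1)) : ℕ) ≤ (k : ℕ) := by
      by_contra hcon
      push_neg at hcon
      have hvle : v ≤ u ⊔ D.x i.castSucc := by
        rw [← D.inf_Mf (u ⊔ D.x i.castSucc)]
        refine Finset.le_inf fun k hk => ?_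
        have hk' : u ⊔ D.x i.castSucc ≤ D.m k := D.mem_Mf.1 hk
        by_contra hv
        exact absurd (D.x_le_m_iff.1 (le_sup_right.trans hk')) (not_le.2 (hcon k hk' hv))
      have : v = u := by
        conv_lhs => rw [← inf_eq_right.2 hvle]
        rw [inf_comm] at hlm ⊢
        exact hlm
      exact huv.lt.ne' this
    have hik : (i : ℕ) ≤ (k : ℕ) := by simpa using hk3
    rcases lt_or_eq_of_le hik with h | h
    · exfalso
      have hjm : D.j i ≤ D.m k := D.j_le_m_of_lt h
      exact hk2 (hveq ▸ sup_le (le_sup_left.trans hk1) hjm)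
    · have : i = k := Fin.ext h
      exact this ▸ le_sup_left.trans hk1
  exact ⟨i, hjv, hju, hum, hvm⟩

end ExtremalChainData

namespace ExtremalChainData

variable {L : Type*} [Lattice L] [Fintype L] [BoundedOrder L] {n : ℕ}
variable (D : ExtremalChainData L n)

/-- Every element of a maximal-length chain satisfies `jᵢ ≤ a ∨ a ≤ mᵢ` for all `i`. -/
lemma union_Jf_Mf (c : Fin (n + 1) → L) (hc : StrictMono c) (s : Fin (n + 1)) :
    ∀ i : Fin n, D.j i ≤ c s ∨ c s ≤ D.m i := by
  classical
  have cardJ : ∀ (t : ℕ) (ht : t < n + 1), t ≤ (D.Jf (c ⟨t, ht⟩)).card := by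
    intro t
    induction t with
    | zero => intro _; exact Nat.zero_le _
    | succ t ih =>
      intro ht
      have h1 : c ⟨t, by omega⟩ < c ⟨t + 1, ht⟩ := hc (by simp [Fin.mk_lt_mk])
      have h2 := Finset.card_lt_card (D.Jf_ssubset h1)
      have h3 := ih (by omega)
      omega
  have cardM : ∀ (d : ℕ), d ≤ n → ∀ s : Fin (n + 1), (s : ℕ) = n - d →
      d ≤ (D.Mf (c s)).card := by
    intro d
    induction d with
    | zero => intros; exact Nat.zero_le _
    | succ d ih =>
      intro hd s hs
      have hlt : c s < c ⟨n - d, by omega⟩ := hc (by rw [Fin.lt_def]; simp [hs]; omega)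
      have h2 := Finset.card_lt_card (D.Mf_ssubset hlt)
      have h3 := ih (by omega) ⟨n - d, by omega⟩ (by simp)
      omega
  have hJ : (s : ℕ) ≤ (D.Jf (c s)).card := by
    have := cardJ (s : ℕ) s.isLt
    simpa using this
  have hM : n - (s : ℕ) ≤ (D.Mf (c s)).card := cardM (n - (s : ℕ)) (by omega) s (by omega)
  have hdisj := D.disjoint_Jf_Mf (c s)
  have hcard : (D.Jf (c s) ∪ D.Mf (c s)).card = (D.Jf (c s)).card + (D.Mf (c s)).card :=
    Finset.card_union_of_disjoint hdisj
  have hle : (D.Jf (c s) ∪ D.Mf (c s)).card ≤ n := by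
    have := Finset.card_le_card (Finset.subset_univ (D.Jf (c s) ∪ D.Mf (c s)))
    simpa using this
  have hsn : (s : ℕ) ≤ n := by omega
  have huniv : D.Jf (c s) ∪ D.Mf (c s) = univ := by
    refine Finset.eq_univ_of_card _ ?_
    rw [Fintype.card_fin]
    omega
  intro i
  have hi : i ∈ D.Jf (c s) ∪ D.Mf (c s) := huniv ▸ mem_univ i
  rcases Finset.mem_union.1 hi with h | h
  · exact Or.inl (D.mem_Jf.1 h)
  · exact Or.inr (D.mem_Mf.1 h)

/-- If `jᵢ ≤ a ∨ a ≤ mᵢ` for every `i` then `a` is left modular (in a trim lattice). -/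
lemma leftModular_of_forall (hD : D.IsTrim) (a : L)
    (hmax : ∀ i : Fin n, D.j i ≤ a ∨ a ≤ D.m i) : LeftModular a := by
  intro y z hyz
  have hle : y ⊔ (a ⊓ z) ≤ (y ⊔ a) ⊓ z :=
    sup_le (le_inf le_sup_left hyz) (le_inf (inf_le_left.trans le_sup_right) inf_le_right)
  refine le_antisymm ?_ hle
  by_contra hne
  have hlt : y ⊔ (a ⊓ z) < (y ⊔ a) ⊓ z := lt_of_le_of_ne hle (fun h => hne h.ge)
  obtain ⟨w, hcov, hwle⟩ := exists_covBy_le' hlt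
  obtain ⟨i, hjv, hju, hum, hvm⟩ := D.label_lemma hD hcov
  rcases hmax i with h | h
  · exact hju (le_trans (le_inf h (hjv.trans (hwle.trans inf_le_right))) le_sup_right)
  · exact hvm (hwle.trans (inf_le_left.trans (sup_le (le_sup_left.trans hum) h)))

end ExtremalChainData

open ExtremalChainData

/-- An element of a trim lattice is left modular iff it lies on the spine,
i.e. on some chain of maximal length. -/
theorem leftModular_iff_spine {L : Type*} [Lattice L] [Fintype L] [BoundedOrder L]
    {n : ℕ} (D : ExtremalChainData L n) (hD : D.IsTrim) :
    ∀ a : L, LeftModular a ↔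
      ∃ c : Fin (n + 1) → L, StrictMono c ∧ ∃ i, c i = a := by
  intro a
  constructor
  · intro ha
    classical
    set u : Fin (n + 1) → L := fun s => D.x s ⊓ a with hu
    set v : Fin (n + 1) → L := fun s => D.x s ⊔ a with hv
    have humono : Monotone u := fun s t h => inf_le_inf_right a (D.x_strictMono.monotone h)
    have hvmono : Monotone v := fun s t h => sup_le_sup_right (D.x_strictMono.monotone h) a
    have hjump : ∀ s : Fin n, u s.castSucc ≠ u s.succ ∨ v s.castSucc ≠ v s.succ := by
      intro s
      by_contra hcon
      push_neg at hcon
      obtain ⟨h1, h2⟩ := hcon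
      have hx := D.x_strictMono (Fin.castSucc_lt_succ (i := s))
      have hlm := ha (D.x s.castSucc) (D.x s.succ) hx.le
      have hL : (D.x s.castSucc ⊔ a) ⊓ D.x s.succ = D.x s.succ := by
        rw [show D.x s.castSucc ⊔ a = v s.castSucc from rfl, h2]
        exact inf_eq_right.2 le_sup_left
      have hR : D.x s.castSucc ⊔ (a ⊓ D.x s.succ) = D.x s.castSucc := by
        rw [inf_comm, show D.x s.succ ⊓ a = u s.succ from rfl, ← h1]
        exact sup_eq_left.2 inf_le_left
      rw [hL, hR] at hlm
      exact hx.ne' hlm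
    set Su : Finset (Fin n) := univ.filter fun s : Fin n => u s.castSucc ≠ u s.succ with hSu
    set Sv : Finset (Fin n) := univ.filter fun s : Fin n => v s.castSucc ≠ v s.succ with hSv
    have hcover : n ≤ Su.card + Sv.card := by
      calc n = (univ : Finset (Fin n)).card := (Finset.card_fin n).symm
        _ ≤ (Su ∪ Sv).card := Finset.card_le_card (fun s _ => by
            rcases hjump s with h | h
            · exact Finset.mem_union_left _ (by simp [hSu, h])
            · exact Finset.mem_union_right _ (by simp [hSv, h]))
        _ ≤ Su.card + Sv.card := Finset.card_union_le _ _
    have hcu := card_jumps_lt_card_image (β := ℕ) u humono Su (fun s hs => by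
      simpa [hSu] using hs)
    have hcv := card_jumps_lt_card_image (β := ℕ) v hvmono Sv (fun s hs => by
      simpa [hSv] using hs)
    set U : Finset L := (univ.image u) ∪ (univ.image v) with hU
    have hinter : ((univ.image u) ∩ (univ.image v)).card ≤ 1 := by
      have hsub : (univ.image u) ∩ (univ.image v) ⊆ {a} := by
        intro b hb
        obtain ⟨hb1, hb2⟩ := Finset.mem_inter.1 hb
        obtain ⟨s, _, hs⟩ := Finset.mem_image.1 hb1
        obtain ⟨t, _, ht⟩ := Finset.mem_image.1 hb2
        have h1 : b ≤ a := hs ▸ inf_le_right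
        have h2 : a ≤ b := ht ▸ le_sup_right
        exact Finset.mem_singleton.2 (le_antisymm h1 h2)
      calc ((univ.image u) ∩ (univ.image v)).card ≤ ({a} : Finset L).card :=
            Finset.card_le_card hsub
        _ = 1 := Finset.card_singleton a
    have hUcard : n + 1 ≤ U.card := by
      have h2 := Finset.card_union_add_card_inter (univ.image u) (univ.image v)
      rw [← hU] at h2
      omega
    have hchain : IsChain (· ≤ ·) (U : Set L) := by
      have hmem : ∀ b ∈ U, (∃ s, u s = b) ∨ (∃ s, v s = b) := by
        intro b hb
        rcases Finset.mem_union.1 hb with h | h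
        · obtain ⟨s, _, hs⟩ := Finset.mem_image.1 h; exact Or.inl ⟨s, hs⟩
        · obtain ⟨s, _, hs⟩ := Finset.mem_image.1 h; exact Or.inr ⟨s, hs⟩
      intro b hb c hc _
      rcases hmem b hb with ⟨s, rfl⟩ | ⟨s, rfl⟩ <;> rcases hmem c hc with ⟨t, rfl⟩ | ⟨t, rfl⟩
      · rcases le_total s t with h | h
        · exact Or.inl (humono h)
        · exact Or.inr (humono h)
      · exact Or.inl (le_trans inf_le_right le_sup_right)
      · exact Or.inr (le_trans inf_le_right le_sup_right)
      · rcases le_total s t with h | h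
        · exact Or.inl (hvmono h)
        · exact Or.inr (hvmono h)
    have h1 : U.card = (U.card - 1) + 1 := by omega
    obtain ⟨c0, hc0, _⟩ := exists_chain_of_card (U.card - 1) U hchain h1
    have hle' : U.card - 1 ≤ n := D.maxlen _ c0 hc0
    have hUc : U.card = n + 1 := by omega
    obtain ⟨c, hcmono, hcmem⟩ := exists_chain_of_card n U hchain hUc
    have haU : a ∈ U := Finset.mem_union_right _
      (Finset.mem_image.2 ⟨0, mem_univ _, by simp [hv, D.x_bot]⟩)
    obtain ⟨i, hi⟩ := (hcmem a).1 haU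
    exact ⟨c, hcmono, i, hi⟩
  · rintro ⟨c, hcmono, i, rfl⟩
    exact D.leftModular_of_forall hD _ (D.union_Jf_Mf c hcmono i)
end

section
/- In a trim lattice L with left modular labelling γ, every element x satisfies x = ⋁_{i ∈ D^γ(x)} j_i = ⋀_{i ∈ U^γ(x)} m_i; in particular x is determined by its set of downward labels, and also by its set of upward labels. -/
namespace ExtremalChainData

variable {L : Type*} [Lattice L] [Fintype L] [BoundedOrder L] {n : ℕ}

lemma x_succ_eq (D : ExtremalChainData L n) (i : Fin n) :
    D.x i.succ = D.x i.castSucc ⊔ D.j i := by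
  have hset : (Finset.univ.filter fun k : Fin n => (k : ℕ) < ((i.succ : Fin (n+1)) : ℕ))
      = insert i (Finset.univ.filter fun k : Fin n => (k : ℕ) < ((i.castSucc : Fin (n+1)) : ℕ)) := by
    ext k
    simp only [Finset.mem_filter, Finset.mem_insert, Finset.mem_univ, true_and,
      Fin.val_succ, Fin.coe_castSucc, Fin.ext_iff]
    omega
  rw [D.x_eq_sup i.succ, D.x_eq_sup i.castSucc, hset, Finset.sup_insert]
  exact sup_comm _ _

lemma x_castSucc_eq (D : ExtremalChainData L n) (i : Fin n) :
    D.x i.castSucc = D.m i ⊓ D.x i.succ := by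
  have hset : (Finset.univ.filter fun k : Fin n => (((i.castSucc : Fin (n+1))) : ℕ) ≤ (k : ℕ))
      = insert i (Finset.univ.filter fun k : Fin n => (((i.succ : Fin (n+1))) : ℕ) ≤ (k : ℕ)) := by
    ext k
    simp only [Finset.mem_filter, Finset.mem_insert, Finset.mem_univ, true_and,
      Fin.val_succ, Fin.coe_castSucc, Fin.ext_iff]
    omega
  rw [D.x_eq_inf i.succ, D.x_eq_inf i.castSucc, hset, Finset.inf_insert]

lemma j_le_x_succ (D : ExtremalChainData L n) (i : Fin n) : D.j i ≤ D.x i.succ := by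
  rw [D.x_succ_eq]; exact le_sup_right

lemma x_castSucc_le_m (D : ExtremalChainData L n) (i : Fin n) :
    D.x i.castSucc ≤ D.m i := by
  rw [D.x_castSucc_eq]; exact inf_le_left

lemma j_not_le_x (D : ExtremalChainData L n) (i : Fin n) : ¬ D.j i ≤ D.x i.castSucc := by
  intro hle
  have h1 : D.x i.castSucc < D.x i.succ := D.x_strictMono Fin.castSucc_lt_succ
  rw [D.x_succ_eq, sup_eq_left.2 hle] at h1
  exact lt_irrefl _ h1

lemma x_succ_not_le_m (D : ExtremalChainData L n) (i : Fin n) : ¬ D.x i.succ ≤ D.m i := by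
  intro hle
  have h1 : D.x i.castSucc < D.x i.succ := D.x_strictMono Fin.castSucc_lt_succ
  rw [D.x_castSucc_eq, inf_eq_right.2 hle] at h1
  exact lt_irrefl _ h1

lemma lt_of_j_le (D : ExtremalChainData L n) {k : Fin n} {t : Fin (n+1)}
    (h : D.j k ≤ D.x t) : (k : ℕ) < (t : ℕ) := by
  by_contra h'
  push_neg at h'
  exact D.j_not_le_x k (h.trans (D.x_strictMono.monotone (show t ≤ k.castSucc by
    simp only [Fin.le_def, Fin.coe_castSucc]; exact h')))

lemma le_of_x_le_m (D : ExtremalChainData L n) {k : Fin n} {t : Fin (n+1)}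
    (h : D.x t ≤ D.m k) : (t : ℕ) ≤ (k : ℕ) := by
  by_contra h'
  push_neg at h'
  exact D.x_succ_not_le_m k ((D.x_strictMono.monotone (show k.succ ≤ t by
    simp only [Fin.le_def, Fin.val_succ]; exact h')).trans h)

/-- Key lemma: if `i` labels the cover `y ⋖ z`, then `jᵢ ≤ z` and `y ⊔ jᵢ = z`. -/
lemma isLabel_sup (D : ExtremalChainData L n) {y z : L} (h : y ⋖ z) {i : Fin n}
    (hl : D.IsLabel y z i) : D.j i ≤ z ∧ y ⊔ D.j i = z := by
  classical
  obtain ⟨h1, h2⟩ := hl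
  set S : Finset L := Finset.univ.filter fun w => w ≤ D.x i.succ ⊓ z ∧ y ⊔ w = z with hSdef
  have hSne : S.Nonempty := ⟨D.x i.succ ⊓ z, by simp [hSdef, h1]⟩
  obtain ⟨w, hwS, hwmin⟩ := S.exists_minimal hSne
  rw [hSdef, Finset.mem_filter] at hwS
  obtain ⟨-, hw1, hw2⟩ := hwS
  have hirr : SupIrred w := by
    constructor
    · intro hmin
      have hwbot : w = ⊥ := le_antisymm (hmin bot_le) bot_le
      rw [hwbot, sup_bot_eq] at hw2
      exact h.lt.ne hw2
    · intro b c hbc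
      by_contra hcon
      push_neg at hcon
      obtain ⟨hb, hc⟩ := hcon
      have hbw : b ≤ w := hbc ▸ le_sup_left
      have hcw : c ≤ w := hbc ▸ le_sup_right
      have hbz : y ⊔ b ≤ z := sup_le h.le (hbw.trans (hw1.trans inf_le_right))
      have hcz : y ⊔ c ≤ z := sup_le h.le (hcw.trans (hw1.trans inf_le_right))
      have hbcase := h.eq_or_eq le_sup_left hbz
      have hccase := h.eq_or_eq le_sup_left hcz
      rcases hbcase with hby | hbz'
      · rcases hccase with hcy | hcz'
        · have : y ⊔ w = y := by
            rw [← hbc, ← sup_assoc, hby, hcy]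
          rw [hw2] at this
          exact h.lt.ne' this
        · refine (lt_of_le_of_ne hcw hc).not_ge (hwmin (show c ∈ S from ?_) hcw)
          rw [hSdef, Finset.mem_filter]
          exact ⟨Finset.mem_univ _, hcw.trans hw1, hcz'⟩
      · refine (lt_of_le_of_ne hbw hb).not_ge (hwmin (show b ∈ S from ?_) hbw)
        rw [hSdef, Finset.mem_filter]
        exact ⟨Finset.mem_univ _, hbw.trans hw1, hbz'⟩
  obtain ⟨k, hk⟩ := D.j_surj w hirr
  have hki : (k : ℕ) < ((i.succ : Fin (n+1)) : ℕ) := D.lt_of_j_le (hk ▸ (hw1.trans inf_le_left))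
  rw [Fin.val_succ] at hki
  have hcondk : y ⊔ (D.x k.succ ⊓ z) = z := by
    refine le_antisymm (sup_le h.le inf_le_right) ?_
    have hwle : w ≤ D.x k.succ ⊓ z :=
      le_inf (hk ▸ D.j_le_x_succ k) (hw1.trans inf_le_right)
    calc z = y ⊔ w := hw2.symm
    _ ≤ y ⊔ (D.x k.succ ⊓ z) := sup_le_sup_left hwle y
  have hik : i ≤ k := h2 k hcondk
  have hik' : i = k := le_antisymm hik (by omega)
  subst hik'
  rw [hk]
  exact ⟨hw1.trans inf_le_right, hw2⟩

/-- Dual key lemma: if `i` labels the cover `y ⋖ z`, then `y ≤ mᵢ` and `z ⊓ mᵢ = y`. -/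
lemma isLabel_inf (D : ExtremalChainData L n) (hD : D.IsTrim) {y z : L} (h : y ⋖ z)
    {i : Fin n} (hl : D.IsLabel y z i) : y ≤ D.m i ∧ z ⊓ D.m i = y := by
  classical
  obtain ⟨h1, h2⟩ := hl
  -- Step 1: x_{i} ⊓ z ≤ y
  have hx : D.x i.castSucc ⊓ z ≤ y := by
    rcases Nat.eq_zero_or_pos (i : ℕ) with hi0 | hipos
    · have : i.castSucc = (0 : Fin (n+1)) := by
        apply Fin.ext; simpa using hi0
      rw [this, D.x_bot, bot_inf_eq]
      exact bot_le
    · set k : Fin n := ⟨(i : ℕ) - 1, by omega⟩ with hkdef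
      have hksucc : k.succ = i.castSucc := by
        apply Fin.ext
        simp only [Fin.val_succ, Fin.coe_castSucc, hkdef]
        omega
      have hnotcond : ¬ (y ⊔ (D.x i.castSucc ⊓ z) = z) := by
        rw [← hksucc]
        intro hc
        have h3 : (i : ℕ) ≤ (i : ℕ) - 1 := h2 k hc
        omega
      have hyt : y ≤ y ⊔ (D.x i.castSucc ⊓ z) := le_sup_left
      have htz : y ⊔ (D.x i.castSucc ⊓ z) ≤ z := sup_le h.le inf_le_right
      rcases h.eq_or_eq hyt htz with ht | ht
      · exact le_sup_right.trans ht.le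
      · exact absurd ht hnotcond
  -- Step 2: left modularity
  have hYT : (y ⊔ D.x i.castSucc) ⊓ z ≤ y := by
    rw [hD i.castSucc y z h.le]
    exact sup_le le_rfl hx
  -- Step 3: maximal element of T
  set T : Finset L := Finset.univ.filter fun w => y ⊔ D.x i.castSucc ≤ w ∧ w ⊓ z ≤ y
    with hTdef
  have hTne : T.Nonempty := ⟨y ⊔ D.x i.castSucc, by simp [hTdef, hYT]⟩
  obtain ⟨w, hwT, hwmax⟩ := T.exists_maximal hTne
  rw [hTdef, Finset.mem_filter] at hwT
  obtain ⟨-, hw1, hw2⟩ := hwT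
  have hyw : y ≤ w := le_sup_left.trans hw1
  have hirr : InfIrred w := by
    constructor
    · intro hmax
      have hwtop : w = ⊤ := le_antisymm le_top (hmax le_top)
      rw [hwtop, top_inf_eq] at hw2
      exact h.lt.not_ge hw2
    · intro b c hbc
      by_contra hcon
      push_neg at hcon
      obtain ⟨hb, hc⟩ := hcon
      have hwb : w ≤ b := hbc ▸ inf_le_left
      have hwc : w ≤ c := hbc ▸ inf_le_right
      have hyb : y ≤ b ⊓ z := le_inf (hyw.trans hwb) h.le
      have hyc : y ≤ c ⊓ z := le_inf (hyw.trans hwc) h.le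
      rcases h.eq_or_eq hyb inf_le_right with hbz | hbz
      · refine (lt_of_le_of_ne hwb (Ne.symm hb)).not_ge (hwmax (show b ∈ T from ?_) hwb)
        rw [hTdef, Finset.mem_filter]
        exact ⟨Finset.mem_univ _, hw1.trans hwb, hbz.le⟩
      · rcases h.eq_or_eq hyc inf_le_right with hcz | hcz
        · refine (lt_of_le_of_ne hwc (Ne.symm hc)).not_ge (hwmax (show c ∈ T from ?_) hwc)
          rw [hTdef, Finset.mem_filter]
          exact ⟨Finset.mem_univ _, hw1.trans hwc, hcz.le⟩
        · have : z ≤ y := by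
            calc z = (b ⊓ z) ⊓ (c ⊓ z) := by rw [hbz, hcz, inf_idem]
            _ = w ⊓ z := by rw [← hbc]; rw [inf_assoc, inf_comm z (c ⊓ z), inf_assoc,
                inf_idem, ← inf_assoc]
            _ ≤ y := hw2
          exact h.lt.not_ge this
  obtain ⟨k, hk⟩ := D.m_surj w hirr
  have hik : (i : ℕ) ≤ (k : ℕ) := by
    have : D.x i.castSucc ≤ D.m k := hk ▸ (le_sup_right.trans hw1)
    have := D.le_of_x_le_m this
    simpa using this
  have hki : (k : ℕ) ≤ (i : ℕ) := by
    by_contra hcon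
    push_neg at hcon
    have hxk : D.x k.castSucc ⊓ z ≤ y := by
      refine le_trans (inf_le_inf_right z ?_) hw2
      rw [← hk]; exact D.x_castSucc_le_m k
    have hxsucc : D.x i.succ ≤ D.x k.castSucc := by
      apply D.x_strictMono.monotone
      simp only [Fin.le_def, Fin.val_succ, Fin.coe_castSucc]
      omega
    have : z ≤ y := by
      rw [← h1]
      exact sup_le le_rfl ((inf_le_inf_right z hxsucc).trans hxk)
    exact h.lt.not_ge this
  have hkeq : k = i := by apply Fin.ext; omega
  subst hkeq
  rw [hk]
  refine ⟨hyw, le_antisymm (by rw [inf_comm]; exact hw2) (le_inf h.le hyw)⟩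

lemma exists_isLabel (D : ExtremalChainData L n) {y z : L} (h : y ⋖ z) :
    ∃ i, D.IsLabel y z i := by
  classical
  have hn : 0 < n := by
    rcases Nat.eq_zero_or_pos n with hn0 | hn0
    · exfalso
      have hbt : (⊥ : L) = ⊤ := by
        rw [← D.x_bot, ← D.x_top]
        congr 1
        apply Fin.ext
        simp [hn0]
      exact h.lt.not_ge (le_trans le_top (hbt ▸ bot_le))
    · exact hn0
  set C : Finset (Fin n) := Finset.univ.filter fun k => y ⊔ (D.x k.succ ⊓ z) = z with hCdef
  have hCne : C.Nonempty := by
    refine ⟨⟨n - 1, by omega⟩, ?_⟩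
    rw [hCdef, Finset.mem_filter]
    refine ⟨Finset.mem_univ _, ?_⟩
    have htop : D.x (⟨n - 1, by omega⟩ : Fin n).succ = ⊤ := by
      rw [← D.x_top]
      congr 1
      apply Fin.ext
      simp only [Fin.val_succ, Fin.val_last]
      omega
    rw [htop, top_inf_eq, sup_eq_right.2 h.le]
  obtain ⟨i, hiC, himin⟩ := C.exists_minimal hCne
  rw [hCdef, Finset.mem_filter] at hiC
  refine ⟨i, hiC.2, fun k hk => ?_⟩
  have hkC : k ∈ C := by rw [hCdef, Finset.mem_filter]; exact ⟨Finset.mem_univ _, hk⟩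
  exact not_lt.mp (fun hlt => hlt.not_ge (himin hkC hlt.le))

lemma exists_cover_below {a b : L} (hab : a < b) : ∃ y, a ≤ y ∧ y ⋖ b := by
  classical
  set S : Finset L := Finset.univ.filter fun y => a ≤ y ∧ y < b with hSdef
  have hSne : S.Nonempty := ⟨a, by simp [hSdef, hab]⟩
  obtain ⟨y, hyS, hymax⟩ := S.exists_maximal hSne
  rw [hSdef, Finset.mem_filter] at hyS
  refine ⟨y, hyS.2.1, hyS.2.2, ?_⟩
  intro c hyc hcb
  refine hyc.not_ge (hymax (show c ∈ S from ?_) hyc.le)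
  rw [hSdef, Finset.mem_filter]
  exact ⟨Finset.mem_univ _, hyS.2.1.trans hyc.le, hcb⟩

lemma exists_cover_above {a b : L} (hab : a < b) : ∃ z, a ⋖ z ∧ z ≤ b := by
  classical
  set S : Finset L := Finset.univ.filter fun z => a < z ∧ z ≤ b with hSdef
  have hSne : S.Nonempty := ⟨b, by simp [hSdef, hab]⟩
  obtain ⟨z, hzS, hzmin⟩ := S.exists_minimal hSne
  rw [hSdef, Finset.mem_filter] at hzS
  refine ⟨z, ⟨hzS.2.1, ?_⟩, hzS.2.2⟩
  intro c hac hcz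
  refine hcz.not_ge (hzmin (show c ∈ S from ?_) hcz.le)
  rw [hSdef, Finset.mem_filter]
  exact ⟨Finset.mem_univ _, hac, hcz.le.trans hzS.2.2⟩

lemma mem_downLabels (D : ExtremalChainData L n) {a : L} {i : Fin n} :
    i ∈ D.downLabels a ↔ ∃ y, y ⋖ a ∧ D.IsLabel y a i := by
  classical
  simp [downLabels]

lemma mem_upLabels (D : ExtremalChainData L n) {a : L} {i : Fin n} :
    i ∈ D.upLabels a ↔ ∃ z, a ⋖ z ∧ D.IsLabel a z i := by
  classical
  simp [upLabels]

lemma eq_sup_downLabels (D : ExtremalChainData L n) (a : L) :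
    a = (D.downLabels a).sup D.j := by
  have hle : (D.downLabels a).sup D.j ≤ a := by
    refine Finset.sup_le fun i hi => ?_
    obtain ⟨y, hcov, hl⟩ := D.mem_downLabels.1 hi
    exact (D.isLabel_sup hcov hl).1
  rcases eq_or_lt_of_le hle with heq | hlt
  · exact heq.symm
  · exfalso
    obtain ⟨y, hsy, hcov⟩ := exists_cover_below hlt
    obtain ⟨i, hl⟩ := D.exists_isLabel hcov
    have hi : i ∈ D.downLabels a := D.mem_downLabels.2 ⟨y, hcov, hl⟩
    have hji : D.j i ≤ y := (Finset.le_sup hi).trans hsy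
    have := (D.isLabel_sup hcov hl).2
    rw [sup_eq_left.2 hji] at this
    exact hcov.lt.ne this

lemma eq_inf_upLabels (D : ExtremalChainData L n) (hD : D.IsTrim) (a : L) :
    a = (D.upLabels a).inf D.m := by
  have hle : a ≤ (D.upLabels a).inf D.m := by
    refine Finset.le_inf fun i hi => ?_
    obtain ⟨z, hcov, hl⟩ := D.mem_upLabels.1 hi
    exact (D.isLabel_inf hD hcov hl).1
  rcases eq_or_lt_of_le hle with heq | hlt
  · exact heq
  · exfalso
    obtain ⟨z, hcov, hzt⟩ := exists_cover_above hlt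
    obtain ⟨i, hl⟩ := D.exists_isLabel hcov
    have hi : i ∈ D.upLabels a := D.mem_upLabels.2 ⟨z, hcov, hl⟩
    have hzi : z ≤ D.m i := hzt.trans (Finset.inf_le hi)
    have := (D.isLabel_inf hD hcov hl).2
    rw [inf_eq_left.2 hzi] at this
    exact hcov.lt.ne' this

end ExtremalChainData


open ExtremalChainData

/-- In a trim lattice, every element `a` satisfies
`a = ⋁_{i ∈ D^γ(a)} jᵢ = ⋀_{i ∈ U^γ(a)} mᵢ`; in particular each element is
determined by its downward labels, and by its upward labels. -/
theorem element_from_labels {L : Type*} [Lattice L] [Fintype L] [BoundedOrder L]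
    {n : ℕ} (D : ExtremalChainData L n) (hD : D.IsTrim) :
    ∀ a : L,
      a = (D.downLabels a).sup D.j ∧
      a = (D.upLabels a).inf D.m ∧
      (∀ b : L, D.downLabels b = D.downLabels a → b = a) ∧
      (∀ b : L, D.upLabels b = D.upLabels a → b = a) := by
  intro a
  refine ⟨D.eq_sup_downLabels a, D.eq_inf_upLabels hD a, ?_, ?_⟩
  · intro b hb
    rw [D.eq_sup_downLabels b, hb, ← D.eq_sup_downLabels a]
  · intro b hb
    rw [D.eq_inf_upLabels hD b, hb, ← D.eq_inf_upLabels hD a]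
end
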